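/- For every commutative ring A there exists a universal FW-derivation: an A-module Ω together with an FW-derivation w : A → Ω such that for every A-module M and every FW-derivation δ : A → M there is a unique A-linear map φ : Ω → M with φ ∘ w = δ. -/

import Mathlib

open scoped TensorProduct

/-- The integer coefficient `(p-1)!/(i!(p-i)!) = C(p,i)/p` appearing in the polynomial `P`. -/
def fwCoeff (p i : ℕ) : ℕ := p.choose i / p

/-- The polynomial `P(a,b) = Σ_{i=1}^{p-1} ((p-1)!/(i!(p-i)!)) a^i b^{p-i}`,
so that `p · P(a,b) = (a+b)^p - a^p - b^p`. -/
def fwP (p : ℕ) {A : Type*} [CommRing A] (a b : A) : A :=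
  ∑ i ∈ Finset.Ioo 0 p, fwCoeff p i • (a ^ i * b ^ (p - i))

/-- A Frobenius–Witt derivation: `w(a+b) = w(a) + w(b) - P(a,b)·w(p·1)` and
`w(ab) = b^p·w(a) + a^p·w(b)`. -/
def IsFWDeriv (p : ℕ) {A M : Type*} [CommRing A] [AddCommGroup M] [Module A M]
    (w : A → M) : Prop :=
  (∀ a b : A, w (a + b) = w a + w b - fwP p a b • w (p : A)) ∧
  (∀ a b : A, w (a * b) = b ^ p • w a + a ^ p • w b)

universe u v

/-- A bundled `A`-module together with a map from `A`. -/
structure FWModuleData (p : ℕ) (A : Type u) [CommRing A] where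
  /-- the underlying module -/
  carrier : Type u
  [isAddCommGroup : AddCommGroup carrier]
  [isModule : Module A carrier]
  /-- the map `A → carrier` -/
  w : A → carrier

attribute [instance] FWModuleData.isAddCommGroup FWModuleData.isModule


variable {p : ℕ} {A : Type u} [CommRing A]

/-- Relation set for the universal FW-derivation. -/
def fwRels (p : ℕ) (A : Type u) [CommRing A] : Set (A →₀ A) :=
  {x | ∃ a b : A, x = Finsupp.single (a + b) 1 - Finsupp.single a 1 - Finsupp.single b 1
      + fwP p a b • Finsupp.single (p : A) 1} ∪
  {x | ∃ a b : A, x = Finsupp.single (a * b) 1 - b ^ p • Finsupp.single a 1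
      - a ^ p • Finsupp.single b 1}

/-- The submodule of relations. -/
noncomputable def fwSub (p : ℕ) (A : Type u) [CommRing A] : Submodule A (A →₀ A) :=
  Submodule.span A (fwRels p A)

theorem fw_universal_exists (p : ℕ) (hp : p.Prime) (A : Type u) [CommRing A] :
    ∃ U : FWModuleData p A, IsFWDeriv p U.w ∧
      ∀ (M : Type v) [AddCommGroup M] [Module A M] (δ : A → M), IsFWDeriv p δ →
        ∃! φ : U.carrier →ₗ[A] M, ∀ a : A, φ (U.w a) = δ a := by
  classical
  let S := fwSub p A
  let U : FWModuleData p A :=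
    { carrier := (A →₀ A) ⧸ S
      w := fun a => Submodule.Quotient.mk (Finsupp.single a 1) }
  refine ⟨U, ⟨?_, ?_⟩, ?_⟩
  · intro a b
    show S.mkQ _ = S.mkQ _ + S.mkQ _ - fwP p a b • S.mkQ _
    rw [← map_smul, ← map_add, ← map_sub, ← sub_eq_zero, ← map_sub,
      Submodule.mkQ_apply, Submodule.Quotient.mk_eq_zero]
    have h : (Finsupp.single (a + b) 1 -
        (Finsupp.single a 1 + Finsupp.single b 1 - fwP p a b • Finsupp.single (p : A) 1)
        : A →₀ A) =
        Finsupp.single (a + b) 1 - Finsupp.single a 1 - Finsupp.single b 1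
        + fwP p a b • Finsupp.single (p : A) 1 := by module
    rw [h]
    exact Submodule.subset_span (Or.inl ⟨a, b, rfl⟩)
  · intro a b
    show S.mkQ _ = (b : A) ^ p • S.mkQ _ + a ^ p • S.mkQ _
    rw [← map_smul, ← map_smul, ← map_add, ← sub_eq_zero, ← map_sub,
      Submodule.mkQ_apply, Submodule.Quotient.mk_eq_zero]
    have h : (Finsupp.single (a * b) 1 -
        (b ^ p • Finsupp.single a 1 + a ^ p • Finsupp.single b 1) : A →₀ A) =
        Finsupp.single (a * b) 1 - b ^ p • Finsupp.single a 1
        - a ^ p • Finsupp.single b 1 := by module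
    rw [h]
    exact Submodule.subset_span (Or.inr ⟨a, b, rfl⟩)
  · intro M _ _ δ hδ
    let L : (A →₀ A) →ₗ[A] M := Finsupp.lift M A A δ
    have hL : ∀ a : A, L (Finsupp.single a 1) = δ a := by
      intro a
      simp [L]
    have hker : S ≤ LinearMap.ker L := by
      refine Submodule.span_le.mpr ?_
      rintro x (⟨a, b, rfl⟩ | ⟨a, b, rfl⟩) <;>
        simp only [SetLike.mem_coe, LinearMap.mem_ker, map_add, map_sub, map_smul, hL]
      · rw [hδ.1 a b]; abel
      · rw [hδ.2 a b]; abel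
    refine ⟨S.liftQ L hker, fun a => ?_, fun ψ hψ => ?_⟩
    · exact hL a
    · refine Submodule.linearMap_qext S ?_
      refine Finsupp.lhom_ext' fun a => ?_
      refine LinearMap.ext_ring ?_
      simp only [LinearMap.comp_apply, LinearMap.coe_comp, Function.comp_apply,
        Finsupp.lsingle_apply, Submodule.mkQ_apply]
      rw [Submodule.liftQ_apply, hL a]
      exact hψ a
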